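/- Let f : X → Y be a continuous map of topological spaces, X' ⊆ X and Y' ⊆ Y subspaces with f(X') ⊆ Y', and let f' : X' → Y' be the restriction of f. Suppose there exist continuous retractions r_X : X → X' and r_Y : Y → Y' (identity on X' and Y' respectively) with r_Y ∘ f = f' ∘ r_X (i.e. f' is a retract of f). Let r ≥ 2. If X^r can be covered by n+1 open sets U_0, …, U_n, each admitting a sequential f-motion planner, then (X')^r can be covered by n+1 open sets V_0, …, V_n, each admitting a sequential f'-motion planner. In particular TC_r(f') ≤ TC_r(f). -/
import Mathlib


/-- The time `j / (r - 1)` in the unit interval, for `j : Fin r` and `2 ≤ r`. -/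
noncomputable def seqTime {r : ℕ} (hr : 2 ≤ r) (j : Fin r) : unitInterval :=
  ⟨((j : ℕ) : ℝ) / ((r : ℝ) - 1), by
    have h2 : (2 : ℝ) ≤ (r : ℝ) := by exact_mod_cast hr
    have hj : ((j : ℕ) : ℝ) + 1 ≤ (r : ℝ) := by exact_mod_cast j.isLt
    constructor
    · exact div_nonneg (Nat.cast_nonneg _) (by linarith)
    · rw [div_le_one (by linarith)]; linarith⟩

/-- The restriction `f' : X' → Y'` of a continuous map `f : X → Y` to subspaces `X' ⊆ X`,
`Y' ⊆ Y` with `f(X') ⊆ Y'`. -/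
def restrictMap {X Y : Type*} [TopologicalSpace X] [TopologicalSpace Y]
    (f : C(X, Y)) (X' : Set X) (Y' : Set Y) (h : Set.MapsTo f X' Y') : C(X', Y') :=
  ⟨fun x => ⟨f x, h x.2⟩, Continuous.subtype_mk (f.continuous.comp continuous_subtype_val) _⟩

/-- **Statement 11.** Let `f' : X' → Y'` be the restriction of `f : X → Y` to subspaces,
and suppose there are continuous retractions `rX : X → X'`, `rY : Y → Y'` with
`rY ∘ f = f' ∘ rX` (so `f'` is a retract of `f`).  Let `r ≥ 2`.  If `X^r` is covered by
`n + 1` open sets each admitting a sequential `f`-motion planner, then `(X')^r` is covered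
by `n + 1` open sets each admitting a sequential `f'`-motion planner.
(In particular `TC_r(f') ≤ TC_r(f)`.) -/
theorem stmt11 {X Y : Type*} [TopologicalSpace X] [TopologicalSpace Y]
    (f : C(X, Y)) (X' : Set X) (Y' : Set Y) (hf : Set.MapsTo f X' Y')
    (rX : C(X, X')) (rY : C(Y, Y'))
    (hrX : ∀ x : X', rX ↑x = x) (hrY : ∀ y : Y', rY ↑y = y)
    (hcomm : ∀ x : X, rY (f x) = restrictMap f X' Y' hf (rX x))
    {r : ℕ} (hr : 2 ≤ r) (n : ℕ)
    (U : Fin (n + 1) → Set (Fin r → X))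
    (hUopen : ∀ i, IsOpen (U i))
    (hUcover : ⋃ i, U i = Set.univ)
    (hUplan : ∀ i, ∃ F : C(U i, C(unitInterval, Y)),
      ∀ (u : U i) (j : Fin r), F u (seqTime hr j) = f (u.1 j)) :
    ∃ V : Fin (n + 1) → Set (Fin r → X'),
      (∀ i, IsOpen (V i)) ∧ (⋃ i, V i = Set.univ) ∧
      (∀ i, ∃ F : C(V i, C(unitInterval, Y')),
        ∀ (v : V i) (j : Fin r), F v (seqTime hr j) = restrictMap f X' Y' hf (v.1 j)) := by
  classical
  set ι : (Fin r → X') → (Fin r → X) := fun v j => (v j : X) with hι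
  have hιc : Continuous ι := continuous_pi fun j =>
    continuous_subtype_val.comp (continuous_apply j)
  refine ⟨fun i => ι ⁻¹' U i, fun i => (hUopen i).preimage hιc, ?_, ?_⟩
  · ext v
    simp only [Set.mem_iUnion, Set.mem_univ, iff_true, Set.mem_preimage]
    have : ι v ∈ ⋃ i, U i := by rw [hUcover]; trivial
    exact Set.mem_iUnion.mp this
  · intro i
    obtain ⟨F, hF⟩ := hUplan i
    have hincl : Continuous fun v : (ι ⁻¹' U i) => (⟨ι v.1, v.2⟩ : U i) :=
      Continuous.subtype_mk (hιc.comp continuous_subtype_val) _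
    refine ⟨⟨fun v => rY.comp (F ⟨ι v.1, v.2⟩),
      (ContinuousMap.continuous_postcomp rY).comp (F.continuous.comp hincl)⟩, ?_⟩
    intro v j
    apply Subtype.ext
    show (rY ((F ⟨ι v.1, v.2⟩) (seqTime hr j)) : Y) = _
    rw [hF ⟨ι v.1, v.2⟩ j]
    show (rY (f (v.1 j : X)) : Y) = _
    rw [hcomm (v.1 j : X), hrX (v.1 j)]
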